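/- The map g_k is a contraction: for every k ≥ 1 and all nonzero bitstrings x, x' ∈ {0,1}^{2k+1} ∖ {0}, the Hamming distance satisfies ‖g_k(x) − g_k(x')‖₁ ≤ ‖x − x'‖₁. -/

import Mathlib

/-- The number of consecutive zeros of `x` cyclically following position `j`
(capped at `2k`, which is no restriction when `x` is nonzero). -/
def runAfter (k : ℕ) (x : Fin (2 * k + 1) → Bool) (j : Fin (2 * k + 1)) : ℕ :=
  (Finset.univ.filter fun t : Fin (2 * k + 1) =>
    0 < (t : ℕ) ∧ ∀ s : Fin (2 * k + 1), 0 < (s : ℕ) → (s : ℕ) ≤ (t : ℕ) →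
      x (j + s) = false).card

/-- The map `g_k` on bitstrings of length `2k+1` (coordinates regarded cyclically):
it fixes every coordinate equal to `1`; on each maximal cyclic block of consecutive
zeros it maps every coordinate to `1`, except that on blocks of odd length the first
coordinate of the block (in cyclic order) stays `0`.  Equivalently, position `j` maps
to `0` iff `x j = 0`, the cyclic predecessor satisfies `x (j-1) = 1` (so `j` is the
first coordinate of its block of zeros), and the number of zeros cyclically following
`j` is even (so the block has odd length). -/
def gmap (k : ℕ) (x : Fin (2 * k + 1) → Bool) : Fin (2 * k + 1) → Bool :=
  fun j =>
    if x j = false ∧ x (j - 1) = true ∧ runAfter k x j % 2 = 0 then false else true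

open Fin.NatCast Fin.CommRing

lemma val_cast' (k : ℕ) {s : ℕ} (hs : s ≤ 2*k) : ((s : Fin (2*k+1)) : ℕ) = s :=
  Fin.val_cast_of_lt (by omega)

lemma cast_nz (k : ℕ) {s : ℕ} (h1 : 1 ≤ s) (h2 : s ≤ 2*k) : (s : Fin (2*k+1)) ≠ 0 := by
  intro h
  have := val_cast' k h2
  rw [h] at this
  simp at this
  omega

lemma runAfter_eq (k r : ℕ) (x : Fin (2*k+1) → Bool) (j : Fin (2*k+1)) (hr : r ≤ 2*k)
    (h1 : ∀ s : ℕ, 1 ≤ s → s ≤ r → x (j + (s : Fin (2*k+1))) = false)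
    (h2 : r = 2*k ∨ x (j + ((r+1 : ℕ) : Fin (2*k+1))) = true) :
    runAfter k x j = r := by
  have key : (Finset.univ.filter fun t : Fin (2 * k + 1) =>
      0 < (t : ℕ) ∧ ∀ s : Fin (2 * k + 1), 0 < (s : ℕ) → (s : ℕ) ≤ (t : ℕ) →
        x (j + s) = false) =
      Finset.univ.filter fun t : Fin (2*k+1) => 1 ≤ (t:ℕ) ∧ (t:ℕ) ≤ r := by
    apply Finset.filter_congr
    intro t _
    simp only [Nat.lt_iff_add_one_le, Nat.zero_add] at *
    constructor
    · rintro ⟨ht1, ht2⟩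
      refine ⟨ht1, ?_⟩
      by_contra hlt
      push_neg at hlt
      rcases h2 with h2 | h2
      · omega
      · have hv : (((r+1 : ℕ) : Fin (2*k+1)) : ℕ) = r + 1 := val_cast' k (by omega)
        have := ht2 ((r+1 : ℕ) : Fin (2*k+1)) (by omega) (by rw [hv]; omega)
        rw [this] at h2; exact Bool.noConfusion h2
    · rintro ⟨ht1, ht2⟩
      refine ⟨ht1, ?_⟩
      intro s hs1 hs2
      have := h1 (s : ℕ) hs1 (le_trans hs2 ht2)
      rwa [Fin.cast_val_eq_self] at this
  rw [runAfter, key]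
  rcases Nat.eq_zero_or_pos r with rfl | hrpos
  · rw [Finset.card_eq_zero, Finset.filter_eq_empty_iff]
    intro t _
    omega
  · have : (Finset.univ.filter fun t : Fin (2*k+1) => 1 ≤ (t:ℕ) ∧ (t:ℕ) ≤ r) =
        Finset.Icc (1 : Fin (2*k+1)) ((r : ℕ) : Fin (2*k+1)) := by
      ext t
      simp only [Finset.mem_filter, Finset.mem_univ, true_and, Finset.mem_Icc, Fin.le_def,
        val_cast' k hr]
      have h1v : ((1 : Fin (2*k+1)) : ℕ) = 1 := by
        have := val_cast' k (s := 1) (by omega)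
        simpa using this
      rw [h1v]
    rw [this, Fin.card_Icc, val_cast' k hr]
    have h1v : ((1 : Fin (2*k+1)) : ℕ) = 1 := by
      have := val_cast' k (s := 1) (by omega)
      simpa using this
    rw [h1v]
    omega

lemma exists_rep (k : ℕ) (i u : Fin (2*k+1)) (h : u ≠ i) :
    ∃ s : ℕ, 1 ≤ s ∧ s ≤ 2*k ∧ u = i + (s : Fin (2*k+1)) := by
  refine ⟨((u - i : Fin (2*k+1)) : ℕ), ?_, ?_, ?_⟩
  · have h0 : u - i ≠ 0 := sub_ne_zero.mpr h
    have : ((u - i : Fin (2*k+1)) : ℕ) ≠ 0 := fun hv => h0 (Fin.ext (by simp [hv]))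
    omega
  · have := (u - i).isLt; omega
  · rw [Fin.cast_val_eq_self]; ring

lemma exists_rep' (k : ℕ) (i u : Fin (2*k+1)) (h : u ≠ i) :
    ∃ s : ℕ, 1 ≤ s ∧ s ≤ 2*k ∧ u = i - (s : Fin (2*k+1)) := by
  refine ⟨((i - u : Fin (2*k+1)) : ℕ), ?_, ?_, ?_⟩
  · have h0 : i - u ≠ 0 := sub_ne_zero.mpr (Ne.symm h)
    have : ((i - u : Fin (2*k+1)) : ℕ) ≠ 0 := fun hv => h0 (Fin.ext (by simp [hv]))
    omega
  · have := (i - u).isLt; omega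
  · rw [Fin.cast_val_eq_self]; ring_nf

lemma plus_to_minus (k : ℕ) (i : Fin (2*k+1)) (s : ℕ) (hs : s ≤ 2*k+1) :
    i + (s : Fin (2*k+1)) = i - (((2*k+1-s : ℕ)) : Fin (2*k+1)) := by
  have : ((s : ℕ) : Fin (2*k+1)) + (((2*k+1-s : ℕ)) : Fin (2*k+1)) = 0 := by
    have h1 : ((s + (2*k+1-s) : ℕ) : Fin (2*k+1)) = 0 := by
      rw [show s + (2*k+1-s) = 2*k+1 by omega]; exact Fin.natCast_self _
    rw [Nat.cast_add] at h1
    exact h1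
  have h2 : ((s : ℕ) : Fin (2*k+1)) = - (((2*k+1-s : ℕ)) : Fin (2*k+1)) := by
    linear_combination this
  rw [h2]; ring

lemma sub_add_cast (k : ℕ) (i : Fin (2*k+1)) (a s : ℕ) (h : s ≤ a) :
    i - (a : Fin (2*k+1)) + (s : Fin (2*k+1)) = i - ((a - s : ℕ) : Fin (2*k+1)) := by
  have h1 : ((a - s : ℕ) : Fin (2*k+1)) + (s : Fin (2*k+1)) = (a : Fin (2*k+1)) := by
    rw [← Nat.cast_add]; congr 1; omega
  linear_combination h1

lemma sub_add_cast' (k : ℕ) (i : Fin (2*k+1)) (a s : ℕ) (h : a ≤ s) :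
    i - (a : Fin (2*k+1)) + (s : Fin (2*k+1)) = i + ((s - a : ℕ) : Fin (2*k+1)) := by
  have h1 : ((a : ℕ) : Fin (2*k+1)) + ((s - a : ℕ) : Fin (2*k+1)) = (s : Fin (2*k+1)) := by
    rw [← Nat.cast_add]; congr 1; omega
  linear_combination -h1

lemma sub_cast_ne (k : ℕ) (i : Fin (2*k+1)) {s : ℕ} (h1 : 1 ≤ s) (h2 : s ≤ 2*k) :
    i - (s : Fin (2*k+1)) ≠ i := fun h => cast_nz k h1 h2 (sub_eq_self.mp h)

lemma add_cast_ne (k : ℕ) (i : Fin (2*k+1)) {s : ℕ} (h1 : 1 ≤ s) (h2 : s ≤ 2*k) :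
    i + (s : Fin (2*k+1)) ≠ i := fun h => cast_nz k h1 h2 (add_eq_left.mp h)

lemma sub_one_ne (k : ℕ) (hk : 1 ≤ k) (j : Fin (2*k+1)) : (j - 1 : Fin (2*k+1)) ≠ j := by
  have := sub_cast_ne k j (s := 1) le_rfl (by omega)
  simpa using this

lemma add_one_ne (k : ℕ) (hk : 1 ≤ k) (j : Fin (2*k+1)) : (j + 1 : Fin (2*k+1)) ≠ j := by
  have := add_cast_ne k j (s := 1) le_rfl (by omega)
  simpa using this


lemma flip_le (k : ℕ) (hk : 1 ≤ k) (x : Fin (2*k+1) → Bool) (i : Fin (2*k+1))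
    (hxi : x i = true) (hx' : Function.update x i false ≠ fun _ => false) :
    ∃ j0, ∀ j, j ≠ j0 → gmap k x j = gmap k (Function.update x i false) j := by
  classical
  set x' := Function.update x i false with hx'def
  have hx'i : x' i = false := Function.update_self i false x
  have hx'ne : ∀ u, u ≠ i → x' u = x u := fun u hu => Function.update_of_ne hu false x
  set P : ℕ → Prop := fun t => ∀ s : ℕ, 1 ≤ s → s ≤ t → x (i - (s : Fin (2*k+1))) = false
    with hPdef
  set Q : ℕ → Prop := fun t => ∀ s : ℕ, 1 ≤ s → s ≤ t → x (i + (s : Fin (2*k+1))) = false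
    with hQdef
  set a := Nat.findGreatest P (2*k) with ha
  set b := Nat.findGreatest Q (2*k) with hb
  have hP0 : P 0 := by intro s hs1 hs2; exact absurd (hs1.trans hs2) (by omega)
  have hQ0 : Q 0 := by intro s hs1 hs2; exact absurd (hs1.trans hs2) (by omega)
  have hPa : P a := Nat.findGreatest_spec (Nat.zero_le _) hP0
  have hQb : Q b := Nat.findGreatest_spec (Nat.zero_le _) hQ0
  have hale : a ≤ 2*k := Nat.findGreatest_le _
  have hble : b ≤ 2*k := Nat.findGreatest_le _
  have hcov : ¬ (∀ u, u ≠ i → x u = false) := by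
    intro h
    apply hx'
    funext u
    by_cases hu : u = i
    · rw [hu]; exact hx'i
    · rw [hx'ne u hu]; exact h u hu
  have halt : a < 2*k := by
    rcases Nat.lt_or_ge a (2*k) with h | h
    · exact h
    · exfalso; apply hcov; intro u hu
      obtain ⟨s, hs1, hs2, rfl⟩ := exists_rep' k i u hu
      exact hPa s hs1 (le_trans hs2 h)
  have hblt : b < 2*k := by
    rcases Nat.lt_or_ge b (2*k) with h | h
    · exact h
    · exfalso; apply hcov; intro u hu
      obtain ⟨s, hs1, hs2, rfl⟩ := exists_rep k i u hu
      exact hQb s hs1 (le_trans hs2 h)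
  have haT : x (i - ((a+1 : ℕ) : Fin (2*k+1))) = true := by
    have hnP : ¬ P (a+1) := Nat.findGreatest_is_greatest (n := 2*k) (by omega) (by omega)
    by_contra hcon
    rw [Bool.not_eq_true] at hcon
    apply hnP
    intro s hs1 hs2
    rcases Nat.lt_or_ge s (a+1) with h | h
    · exact hPa s hs1 (by omega)
    · have : s = a + 1 := by omega
      rw [this]; exact hcon
  have hbT : x (i + ((b+1 : ℕ) : Fin (2*k+1))) = true := by
    have hnQ : ¬ Q (b+1) := Nat.findGreatest_is_greatest (n := 2*k) (by omega) (by omega)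
    by_contra hcon
    rw [Bool.not_eq_true] at hcon
    apply hnQ
    intro s hs1 hs2
    rcases Nat.lt_or_ge s (b+1) with h | h
    · exact hQb s hs1 (by omega)
    · have : s = b + 1 := by omega
      rw [this]; exact hcon
  have hab : a + b < 2*k := by
    by_contra h
    push_neg at h
    apply hcov; intro u hu
    obtain ⟨s, hs1, hs2, rfl⟩ := exists_rep k i u hu
    rcases le_or_gt s b with hsb | hsb
    · exact hQb s hs1 hsb
    · rw [plus_to_minus k i s (by omega)]
      exact hPa (2*k+1-s) (by omega) (by omega)
  have gtrue1 : ∀ (y : Fin (2*k+1) → Bool) (j : Fin (2*k+1)), y j = true → gmap k y j = true := by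
    intro y j h; simp [gmap, h]
  have gtrue2 : ∀ (y : Fin (2*k+1) → Bool) (j : Fin (2*k+1)), y (j - 1) = false →
      gmap k y j = true := by
    intro y j h; simp [gmap, h]
  have gval : ∀ (y : Fin (2*k+1) → Bool) (j : Fin (2*k+1)), y j = false → y (j - 1) = true →
      gmap k y j = (if runAfter k y j % 2 = 0 then false else true) := by
    intro y j h1 h2; simp [gmap, h1, h2]
  have hone_ne : ((1 : ℕ) : Fin (2*k+1)) ≠ 0 := cast_nz k le_rfl (by omega)
  refine ⟨if b % 2 = 0 then i - ((a : ℕ) : Fin (2*k+1)) else i + 1, ?_⟩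
  intro j hj
  by_cases hji : j = i
  · subst hji
    rw [gtrue1 x j hxi]
    rcases Nat.eq_zero_or_pos a with ha0 | ha1
    · have hbodd : b % 2 = 1 := by
        rcases Nat.mod_two_eq_zero_or_one b with h | h
        · exfalso; apply hj; rw [if_pos h, ha0]; simp
        · exact h
      have hpred : x' (j - 1) = true := by
        have hne : (j - 1 : Fin (2*k+1)) ≠ j := sub_one_ne k hk j
        rw [hx'ne _ hne]
        have := haT
        rw [ha0] at this
        simpa using this
      have hrun : runAfter k x' j = b := by
        apply runAfter_eq k b x' j hble
        · intro s hs1 hs2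
          have hne : j + ((s:ℕ) : Fin (2*k+1)) ≠ j := add_cast_ne k j hs1 (by omega)
          rw [hx'ne _ hne]; exact hQb s hs1 hs2
        · right
          have hne : j + (((b+1:ℕ)) : Fin (2*k+1)) ≠ j := add_cast_ne k j (by omega) (by omega)
          rw [hx'ne _ hne]; exact hbT
      rw [gval x' j hx'i hpred, hrun, if_neg (by omega)]
    · have hpred : x' (j - 1) = false := by
        have hne : (j - 1 : Fin (2*k+1)) ≠ j := sub_one_ne k hk j
        rw [hx'ne _ hne]
        have := hPa 1 le_rfl ha1
        simpa using this
      rw [gtrue2 x' j hpred]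
  by_cases hji1 : j = i + 1
  · subst hji1
    by_cases hxi1 : x (i+1) = true
    · have hne : (i + 1 : Fin (2*k+1)) ≠ i := add_one_ne k hk i
      rw [gtrue1 x _ hxi1, gtrue1 x' _ (by rw [hx'ne _ hne]; exact hxi1)]
    · rw [Bool.not_eq_true] at hxi1
      have hb1 : 1 ≤ b := by
        by_contra hcon
        have hb0 : b = 0 := by omega
        have := hbT
        rw [hb0] at this
        simp only [Nat.zero_add, Nat.cast_one] at this
        rw [this] at hxi1
        exact Bool.noConfusion hxi1
      have hbev : b % 2 = 0 := by
        rcases Nat.mod_two_eq_zero_or_one b with h | h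
        · exact h
        · exfalso; apply hj; rw [if_neg (by omega)]
      have hg2 : gmap k x' (i+1) = true := by
        apply gtrue2
        rw [show (i + 1 - 1 : Fin (2*k+1)) = i by ring]
        exact hx'i
      have hrun : runAfter k x (i+1) = b - 1 := by
        apply runAfter_eq k (b-1) x (i+1) (by omega)
        · intro s hs1 hs2
          rw [show (i + 1 + ((s:ℕ) : Fin (2*k+1))) = i + (((s+1:ℕ)) : Fin (2*k+1)) by
            push_cast; ring]
          exact hQb (s+1) (by omega) (by omega)
        · right
          rw [show (b-1)+1 = b by omega]
          rw [show (i + 1 + ((b:ℕ) : Fin (2*k+1))) = i + (((b+1:ℕ)) : Fin (2*k+1)) by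
            push_cast; ring]
          exact hbT
      have hpred : x (i + 1 - 1) = true := by
        rw [show (i + 1 - 1 : Fin (2*k+1)) = i by ring]; exact hxi
      rw [gval x (i+1) hxi1 hpred, hrun, if_neg (by omega), hg2]
  by_cases hja : j = i - ((a : ℕ) : Fin (2*k+1))
  · subst hja
    have haa : 1 ≤ a := by
      rcases Nat.eq_zero_or_pos a with h | h
      · exfalso; apply hji; rw [h]; simp
      · exact h
    have hbodd : b % 2 = 1 := by
      rcases Nat.mod_two_eq_zero_or_one b with h | h
      · exfalso; apply hj; rw [if_pos h]
      · exact h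
    have hja_ne : i - ((a:ℕ) : Fin (2*k+1)) ≠ i := sub_cast_ne k i haa hale
    have hpred_eq : (i - ((a:ℕ) : Fin (2*k+1)) - 1 : Fin (2*k+1)) =
        i - (((a+1:ℕ)) : Fin (2*k+1)) := by push_cast; ring
    have hpred_ne : i - (((a+1:ℕ)) : Fin (2*k+1)) ≠ i := sub_cast_ne k i (by omega) (by omega)
    have hgx : x (i - ((a:ℕ) : Fin (2*k+1))) = false := hPa a haa le_rfl
    have hrunx : runAfter k x (i - ((a:ℕ) : Fin (2*k+1))) = a - 1 := by
      apply runAfter_eq k (a-1) x _ (by omega)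
      · intro s hs1 hs2
        rw [sub_add_cast k i a s (by omega)]
        exact hPa (a-s) (by omega) (by omega)
      · right
        rw [show (a-1)+1 = a by omega, show (i - ((a:ℕ) : Fin (2*k+1)) +
          ((a:ℕ) : Fin (2*k+1))) = i by ring]
        exact hxi
    have hrunx' : runAfter k x' (i - ((a:ℕ) : Fin (2*k+1))) = a + b := by
      apply runAfter_eq k (a+b) x' _ (by omega)
      · intro s hs1 hs2
        rcases lt_trichotomy s a with h | h | h
        · rw [sub_add_cast k i a s (by omega)]
          have hne : i - (((a-s:ℕ)) : Fin (2*k+1)) ≠ i := sub_cast_ne k i (by omega) (by omega)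
          rw [hx'ne _ hne]
          exact hPa (a-s) (by omega) (by omega)
        · rw [h, show (i - ((a:ℕ) : Fin (2*k+1)) + ((a:ℕ) : Fin (2*k+1))) = i by ring]
          exact hx'i
        · rw [sub_add_cast' k i a s (by omega)]
          have hne : i + (((s-a:ℕ)) : Fin (2*k+1)) ≠ i := add_cast_ne k i (by omega) (by omega)
          rw [hx'ne _ hne]
          exact hQb (s-a) (by omega) (by omega)
      · right
        rw [sub_add_cast' k i a (a+b+1) (by omega), show a+b+1-a = b+1 by omega]
        have hne : i + (((b+1:ℕ)) : Fin (2*k+1)) ≠ i := add_cast_ne k i (by omega) (by omega)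
        rw [hx'ne _ hne]
        exact hbT
    rw [gval x _ hgx (by rw [hpred_eq]; exact haT),
      gval x' _ (by rw [hx'ne _ hja_ne]; exact hgx)
        (by rw [hpred_eq, hx'ne _ hpred_ne]; exact haT),
      hrunx, hrunx', show (a-1) % 2 = (a+b) % 2 by omega]
  · -- generic case
    have hj1i : (j - 1 : Fin (2*k+1)) ≠ i := by
      intro h
      apply hji1
      rw [← h]; ring
    by_cases hxj : x j = true
    · rw [gtrue1 x j hxj, gtrue1 x' j (by rw [hx'ne j hji]; exact hxj)]
    by_cases hxj1 : x (j-1) = false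
    · rw [gtrue2 x j hxj1, gtrue2 x' j (by rw [hx'ne _ hj1i]; exact hxj1)]
    rw [Bool.not_eq_true] at hxj
    rw [Bool.not_eq_false] at hxj1
    set R : ℕ → Prop := fun t => ∀ s : ℕ, 1 ≤ s → s ≤ t → x (j + (s : Fin (2*k+1))) = false
      with hRdef
    set r := Nat.findGreatest R (2*k) with hr
    have hR0 : R 0 := by intro s hs1 hs2; exact absurd (hs1.trans hs2) (by omega)
    have hRr : R r := Nat.findGreatest_spec (Nat.zero_le _) hR0
    have hrle : r ≤ 2*k := Nat.findGreatest_le _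
    have hrlt : r < 2*k := by
      rcases Nat.lt_or_ge r (2*k) with h | h
      · exact h
      · exfalso
        obtain ⟨s, hs1, hs2, hrep⟩ := exists_rep k j i (Ne.symm hji)
        have := hRr s hs1 (by omega)
        rw [← hrep, hxi] at this
        exact Bool.noConfusion this
    have hrT : x (j + ((r+1 : ℕ) : Fin (2*k+1))) = true := by
      have hnR : ¬ R (r+1) := Nat.findGreatest_is_greatest (n := 2*k) (by omega) (by omega)
      by_contra hcon
      rw [Bool.not_eq_true] at hcon
      apply hnR
      intro s hs1 hs2
      rcases Nat.lt_or_ge s (r+1) with h | h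
      · exact hRr s hs1 (by omega)
      · have : s = r + 1 := by omega
        rw [this]; exact hcon
    have hne_run : ∀ s : ℕ, 1 ≤ s → s ≤ r → j + ((s:ℕ) : Fin (2*k+1)) ≠ i := by
      intro s hs1 hs2 heq
      have := hRr s hs1 hs2
      rw [heq, hxi] at this
      exact Bool.noConfusion this
    have hterm_ne : j + ((r+1 : ℕ) : Fin (2*k+1)) ≠ i := by
      intro heq
      have hj_eq : j = i - ((r+1 : ℕ) : Fin (2*k+1)) := by rw [← heq]; ring
      have haP : P (r+1) := by
        intro s hs1 hs2
        rcases Nat.lt_or_ge s (r+1) with h | h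
        · rw [show (i - ((s:ℕ) : Fin (2*k+1))) = j + (((r+1-s:ℕ)) : Fin (2*k+1)) by
            rw [hj_eq, sub_add_cast k i (r+1) (r+1-s) (by omega),
              show r+1-(r+1-s) = s by omega]]
          exact hRr (r+1-s) (by omega) (by omega)
        · have hs : s = r+1 := by omega
          rw [hs, ← hj_eq]
          exact hxj
      have hage : r+1 ≤ a := Nat.le_findGreatest (by omega) haP
      have hale2 : a ≤ r+1 := by
        by_contra hcc
        push_neg at hcc
        have hfa := hPa (r+2) (by omega) (by omega)
        rw [show (i - (((r+2:ℕ)) : Fin (2*k+1))) = j - 1 by rw [hj_eq]; push_cast; ring,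
          hxj1] at hfa
        exact Bool.noConfusion hfa
      exact hja (by rw [hj_eq, show a = r+1 by omega])
    have hrunx : runAfter k x j = r := runAfter_eq k r x j (by omega) hRr (Or.inr hrT)
    have hrunx' : runAfter k x' j = r := by
      apply runAfter_eq k r x' j (by omega)
      · intro s hs1 hs2
        rw [hx'ne _ (hne_run s hs1 hs2)]
        exact hRr s hs1 hs2
      · right
        rw [hx'ne _ hterm_ne]
        exact hrT
    rw [gval x j hxj hxj1,
      gval x' j (by rw [hx'ne j hji]; exact hxj) (by rw [hx'ne _ hj1i]; exact hxj1),
      hrunx, hrunx']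

lemma flip_dist (k : ℕ) (hk : 1 ≤ k) (x : Fin (2*k+1) → Bool) (i : Fin (2*k+1))
    (hxi : x i = true) (hx' : Function.update x i false ≠ fun _ => false) :
    hammingDist (gmap k x) (gmap k (Function.update x i false)) ≤ 1 := by
  obtain ⟨j0, h⟩ := flip_le k hk x i hxi hx'
  have hsub : (Finset.univ.filter fun j =>
      gmap k x j ≠ gmap k (Function.update x i false) j) ⊆ {j0} := by
    intro j hmem
    rw [Finset.mem_filter] at hmem
    rw [Finset.mem_singleton]
    by_contra hne
    exact hmem.2 (h j hne)
  calc hammingDist (gmap k x) (gmap k (Function.update x i false))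
      ≤ ({j0} : Finset (Fin (2*k+1))).card := Finset.card_le_card hsub
    _ = 1 := Finset.card_singleton _

lemma distdec {k : ℕ} (x x' : Fin (2*k+1) → Bool) (i : Fin (2*k+1)) (hi : x i ≠ x' i) :
    hammingDist (Function.update x i (x' i)) x' < hammingDist x x' := by
  apply Finset.card_lt_card
  have hsub : (Finset.univ.filter fun j => Function.update x i (x' i) j ≠ x' j) ⊆
      (Finset.univ.filter fun j => x j ≠ x' j) := by
    intro j hj
    simp only [Finset.mem_filter, Finset.mem_univ, true_and] at *
    by_cases hji : j = i
    · subst hji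
      rw [Function.update_self] at hj
      exact absurd rfl hj
    · rwa [Function.update_of_ne hji] at hj
  exact (Finset.ssubset_iff_of_subset hsub).mpr ⟨i, by simp [hi], by simp⟩

lemma exists_true {n : ℕ} (x : Fin n → Bool) (h : x ≠ fun _ => false) : ∃ p, x p = true := by
  by_contra hc
  push_neg at hc
  apply h
  funext u
  cases hxx : x u with
  | false => rfl
  | true => exact absurd hxx (hc u)


/-- The map `g_k` is a contraction: for all nonzero bitstrings
`x, x' ∈ {0,1}^{2k+1}`, the Hamming distance satisfies
`‖g_k(x) − g_k(x')‖₁ ≤ ‖x − x'‖₁`. -/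
theorem stmt16 (k : ℕ) (hk : 1 ≤ k) (x x' : Fin (2 * k + 1) → Bool)
    (hx : x ≠ fun _ => false) (hx' : x' ≠ fun _ => false) :
    hammingDist (gmap k x) (gmap k x') ≤ hammingDist x x' := by

  classical
  suffices H : ∀ d, ∀ x x' : Fin (2*k+1) → Bool, x ≠ (fun _ => false) → x' ≠ (fun _ => false) →
      hammingDist x x' ≤ d → hammingDist (gmap k x) (gmap k x') ≤ hammingDist x x' by
    exact H (hammingDist x x') x x' hx hx' le_rfl
  intro d
  induction d with
  | zero =>
    intro x x' _ _ hle
    have hxx : x = x' := hammingDist_eq_zero.mp (Nat.le_antisymm hle (Nat.zero_le _))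
    rw [hxx, hammingDist_self]
    exact Nat.zero_le _
  | succ d ih =>
    intro x x' hx hx' hle
    by_cases heq : x = x'
    · rw [heq, hammingDist_self]
      exact Nat.zero_le _
    · obtain ⟨i, hi⟩ : ∃ i, x i ≠ x' i := by
        by_contra hc
        push_neg at hc
        exact heq (funext hc)
      by_cases hcase : ∃ i, x i = false ∧ x' i = true
      · obtain ⟨i, hxi0, hx'i1⟩ := hcase
        have hine : x i ≠ x' i := by rw [hxi0, hx'i1]; exact Bool.false_ne_true
        set y := Function.update x i true with hy
        have hyi : y i = true := Function.update_self i true x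
        have hyne : y ≠ fun _ => false := by
          intro h
          have := congrFun h i
          rw [hyi] at this
          exact Bool.noConfusion this
        have hxupd : Function.update y i false = x := by
          funext u
          by_cases hu : u = i
          · subst hu
            rw [Function.update_self, hxi0]
          · rw [Function.update_of_ne hu, hy, Function.update_of_ne hu]
        have h1 : hammingDist (gmap k y) (gmap k x) ≤ 1 := by
          have := flip_dist k hk y i hyi (by rw [hxupd]; exact hx)
          rwa [hxupd] at this
        have hyx' : hammingDist y x' < hammingDist x x' := by
          have hyy : y = Function.update x i (x' i) := by rw [hy, hx'i1]
          rw [hyy]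
          exact distdec x x' i hine
        have h2 : hammingDist (gmap k y) (gmap k x') ≤ hammingDist y x' :=
          ih y x' hyne hx' (by omega)
        calc hammingDist (gmap k x) (gmap k x')
            ≤ hammingDist (gmap k x) (gmap k y) + hammingDist (gmap k y) (gmap k x') :=
              hammingDist_triangle _ _ _
          _ ≤ 1 + hammingDist y x' := by
              have := hammingDist_comm (gmap k y) (gmap k x)
              omega
          _ ≤ hammingDist x x' := by omega
      · push_neg at hcase
        have hxi1 : x i = true := by
          cases hxx : x i with
          | false =>
            exfalso
            have h1 := hcase i hxx
            have h1f : x' i = false := by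
              cases hq : x' i with
              | false => rfl
              | true => exact absurd hq h1
            exact hi (hxx.trans h1f.symm)
          | true => rfl
        have hx'i0 : x' i = false := by
          cases hxx : x' i with
          | false => rfl
          | true => exact absurd (hxi1.trans hxx.symm) hi
        set y := Function.update x i false with hy
        have hyeq : y = Function.update x i (x' i) := by rw [hy, hx'i0]
        have hyne : y ≠ fun _ => false := by
          obtain ⟨p, hp⟩ := exists_true x' hx'
          have hxp : x p = true := by
            cases hq : x p with
            | false => exact absurd hp (hcase p hq)
            | true => rfl
          have hpne : p ≠ i := by
            intro h
            rw [h, hx'i0] at hp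
            exact Bool.noConfusion hp
          intro h
          have := congrFun h p
          rw [hy, Function.update_of_ne hpne, hxp] at this
          exact Bool.noConfusion this
        have h1 : hammingDist (gmap k x) (gmap k y) ≤ 1 := flip_dist k hk x i hxi1 hyne
        have hyx' : hammingDist y x' < hammingDist x x' := by
          rw [hyeq]
          exact distdec x x' i hi
        have h2 : hammingDist (gmap k y) (gmap k x') ≤ hammingDist y x' :=
          ih y x' hyne hx' (by omega)
        calc hammingDist (gmap k x) (gmap k x')
            ≤ hammingDist (gmap k x) (gmap k y) + hammingDist (gmap k y) (gmap k x') :=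
              hammingDist_triangle _ _ _
          _ ≤ 1 + hammingDist y x' := by omega
          _ ≤ hammingDist x x' := by omega
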